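/- Let N be a positive integer, let P_N = {2i − N − 1 : i = 1, …, N} ⊆ ℤ, let A_{N²} = {a + b·i : a, b ∈ P_N} ⊆ ℂ be the square QAM constellation of size N², and let F be a 2 × 2 matrix with real entries acting ℂ-linearly on ℂ². Let D_C = {x − x′ : x, x′ ∈ A_{N²}} and D_R = {p − p′ : p, p′ ∈ P_N}. Then min{ ‖F Δ‖² : Δ ∈ D_C × D_C, Δ ≠ 0 } = min{ ‖F Δ‖² : Δ ∈ D_R × D_R, Δ ≠ 0 }. (This is the paper's claim that for a real-valued precoder, the minimum received distance over the M-QAM constellation equals that over the √M-PAM constellation.) -/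

import Mathlib

/-- The `n`-PAM constellation `{2i - n - 1 : i = 1, …, n} ⊆ ℤ`. -/
def PAM (n : ℕ) : Set ℤ :=
  {m | ∃ i : ℕ, 1 ≤ i ∧ i ≤ n ∧ m = 2 * (i : ℤ) - n - 1}

/-- The square QAM constellation of size `n²`: `{a + b·i : a, b ∈ PAM n} ⊆ ℂ`. -/
def QAM (n : ℕ) : Set ℂ :=
  {z | ∃ a b : ℤ, a ∈ PAM n ∧ b ∈ PAM n ∧ z = (a : ℂ) + (b : ℂ) * Complex.I}

private lemma key_split (F : Matrix (Fin 2) (Fin 2) ℝ) (Δ : Fin 2 → ℂ) :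
    ∑ i, ‖∑ j, (F i j : ℂ) * Δ j‖ ^ 2
      = (∑ i, (∑ j, F i j * (Δ j).re) ^ 2) + (∑ i, (∑ j, F i j * (Δ j).im) ^ 2) := by
  simp only [Fin.sum_univ_two, Complex.sq_norm, Complex.normSq_apply, Complex.add_re,
    Complex.add_im, Complex.mul_re, Complex.mul_im, Complex.ofReal_re, Complex.ofReal_im]
  ring

/-- For a real-valued `2 × 2` precoder `F`, the minimum of `‖F Δ‖²` over nonzero
difference vectors of the `N²`-QAM constellation equals the minimum over nonzero
difference vectors of the `N`-PAM constellation. -/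
theorem stmt4 (N : ℕ) (hN : 0 < N) (F : Matrix (Fin 2) (Fin 2) ℝ) :
    sInf {r : ℝ | ∃ Δ : Fin 2 → ℂ,
        (∀ i, ∃ x x' : ℂ, x ∈ QAM N ∧ x' ∈ QAM N ∧ Δ i = x - x') ∧ Δ ≠ 0 ∧
        r = ∑ i, ‖∑ j, (F i j : ℂ) * Δ j‖ ^ 2}
      = sInf {r : ℝ | ∃ Δ : Fin 2 → ℝ,
          (∀ i, ∃ p p' : ℤ, p ∈ PAM N ∧ p' ∈ PAM N ∧ Δ i = (p : ℝ) - (p' : ℝ)) ∧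
          Δ ≠ 0 ∧ r = ∑ i, (∑ j, F i j * Δ j) ^ 2} := by
  set S : Set ℝ := {r : ℝ | ∃ Δ : Fin 2 → ℂ,
        (∀ i, ∃ x x' : ℂ, x ∈ QAM N ∧ x' ∈ QAM N ∧ Δ i = x - x') ∧ Δ ≠ 0 ∧
        r = ∑ i, ‖∑ j, (F i j : ℂ) * Δ j‖ ^ 2} with hS
  set T : Set ℝ := {r : ℝ | ∃ Δ : Fin 2 → ℝ,
          (∀ i, ∃ p p' : ℤ, p ∈ PAM N ∧ p' ∈ PAM N ∧ Δ i = (p : ℝ) - (p' : ℝ)) ∧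
          Δ ≠ 0 ∧ r = ∑ i, (∑ j, F i j * Δ j) ^ 2} with hT
  -- some element of PAM N
  obtain ⟨q, hq⟩ : ∃ q : ℤ, q ∈ PAM N := ⟨(1 : ℤ) - N, 1, le_rfl, hN, by push_cast; ring⟩
  -- T ⊆ S
  have hTS : T ⊆ S := by
    rintro r ⟨Δ, hmem, hne, rfl⟩
    refine ⟨fun i => ((Δ i : ℝ) : ℂ), fun i => ?_, ?_, ?_⟩
    · obtain ⟨p, p', hp, hp', hΔi⟩ := hmem i
      exact ⟨(p : ℂ) + (q : ℂ) * Complex.I, (p' : ℂ) + (q : ℂ) * Complex.I,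
        ⟨p, q, hp, hq, rfl⟩, ⟨p', q, hp', hq, rfl⟩, by show ((Δ i : ℝ) : ℂ) = _; rw [hΔi]; push_cast; ring⟩
    · intro h0
      apply hne
      funext i
      have := congrFun h0 i
      simpa using this
    · rw [key_split]
      simp
  -- every element of T is nonnegative
  have hT0 : ∀ r ∈ T, (0 : ℝ) ≤ r := by
    rintro r ⟨Δ, _, _, rfl⟩
    exact Finset.sum_nonneg fun i _ => sq_nonneg _
  have hTbdd : BddBelow T := ⟨0, hT0⟩
  -- for every element of S there is a smaller element of T
  have hST : ∀ r ∈ S, ∃ s ∈ T, s ≤ r := by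
    rintro r ⟨Δ, hmem, hne, rfl⟩
    have hre : ∀ i, ∃ p p' : ℤ, p ∈ PAM N ∧ p' ∈ PAM N ∧ (Δ i).re = (p : ℝ) - (p' : ℝ) := by
      intro i
      obtain ⟨x, x', ⟨a, b, ha, hb, hx⟩, ⟨a', b', ha', hb', hx'⟩, hΔi⟩ := hmem i
      exact ⟨a, a', ha, ha', by rw [hΔi, hx, hx']; simp⟩
    have him : ∀ i, ∃ p p' : ℤ, p ∈ PAM N ∧ p' ∈ PAM N ∧ (Δ i).im = (p : ℝ) - (p' : ℝ) := by
      intro i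
      obtain ⟨x, x', ⟨a, b, ha, hb, hx⟩, ⟨a', b', ha', hb', hx'⟩, hΔi⟩ := hmem i
      exact ⟨b, b', hb, hb', by rw [hΔi, hx, hx']; simp⟩
    have hsplit := key_split F Δ
    have hnz : (fun i => (Δ i).re) ≠ 0 ∨ (fun i => (Δ i).im) ≠ 0 := by
      by_contra h
      push_neg at h
      apply hne
      funext i
      have h1 := congrFun h.1 i
      have h2 := congrFun h.2 i
      simp only [Pi.zero_apply] at h1 h2
      exact Complex.ext h1 h2
    rcases hnz with h | h
    · refine ⟨∑ i, (∑ j, F i j * (Δ j).re) ^ 2, ⟨fun i => (Δ i).re, hre, h, rfl⟩, ?_⟩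
      rw [hsplit]
      exact le_add_of_nonneg_right (Finset.sum_nonneg fun i _ => sq_nonneg _)
    · refine ⟨∑ i, (∑ j, F i j * (Δ j).im) ^ 2, ⟨fun i => (Δ i).im, him, h, rfl⟩, ?_⟩
      rw [hsplit]
      exact le_add_of_nonneg_left (Finset.sum_nonneg fun i _ => sq_nonneg _)
  by_cases hTne : T.Nonempty
  · have hSne : S.Nonempty := ⟨hTne.choose, hTS hTne.choose_spec⟩
    refine le_antisymm ?_ ?_
    · exact csInf_le_csInf ⟨0, fun r hr => hT0 _ (hST r hr |>.choose_spec.1) |>.trans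
        (hST r hr).choose_spec.2⟩ hTne hTS
    · refine le_csInf hSne fun r hr => ?_
      obtain ⟨s, hsT, hsr⟩ := hST r hr
      exact (csInf_le hTbdd hsT).trans hsr
  · have hSe : S = ∅ := by
      rw [Set.eq_empty_iff_forall_notMem]
      intro r hr
      obtain ⟨s, hsT, _⟩ := hST r hr
      exact hTne ⟨s, hsT⟩
    rw [hSe, Set.not_nonempty_iff_eq_empty.mp hTne]
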